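/- Let E be a barrelled locally convex Hausdorff topological vector space over ℂ and let T : E → E be a continuous linear operator such that lim_{n→∞} (1/n)·Tⁿx = 0 for every x ∈ E. Then the family {(1/n)·Tⁿ : n ≥ 1} is equicontinuous and T is topologizable, i.e. for every continuous seminorm p on E there is a continuous seminorm q on E such that for every m ∈ ℕ there is γ_m > 0 with p(Tᵐx) ≤ γ_m·q(x) for all x ∈ E. -/

import Mathlib

open Filter Topology Uniformity

/-- If `E` is barrelled and `(1/n) Tⁿ x → 0` for every `x`, then `{(1/n) Tⁿ : n ≥ 1}` is
equicontinuous and `T` is topologizable. -/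
theorem stmt7 {E : Type*} [AddCommGroup E] [Module ℂ E] [Module ℝ E] [IsScalarTower ℝ ℂ E]
    [UniformSpace E] [IsUniformAddGroup E] [ContinuousSMul ℂ E]
    [LocallyConvexSpace ℝ E] [T2Space E]
    -- `E` is barrelled: every pointwise bounded family of continuous linear operators on `E`
    -- is equicontinuous (Banach–Steinhaus property)
    (hbarrelled : ∀ (ι : Type) (f : ι → E →L[ℂ] E),
      (∀ x : E, Bornology.IsVonNBounded ℂ (Set.range fun i => f i x)) →
        Equicontinuous fun i => ⇑(f i))
    (T : E →L[ℂ] E)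
    (hT : ∀ x : E, Tendsto (fun n : ℕ => (n : ℂ)⁻¹ • (T ^ n) x) atTop (𝓝 (0 : E))) :
    -- the family `{(1/n) Tⁿ : n ≥ 1}` is equicontinuous ...
    (Equicontinuous fun n : ℕ => fun x : E => ((n + 1 : ℕ) : ℂ)⁻¹ • (T ^ (n + 1)) x) ∧
      -- ... and `T` is topologizable
      ∀ p : Seminorm ℂ E, Continuous p → ∃ q : Seminorm ℂ E, Continuous ⇑q ∧
        ∀ m : ℕ, ∃ γ : ℝ, 0 < γ ∧ ∀ x : E, p ((T ^ m) x) ≤ γ * q x := by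
  -- the family of operators
  set f : ℕ → E →L[ℂ] E := fun n => ((n + 1 : ℕ) : ℂ)⁻¹ • T ^ (n + 1) with hf
  -- each orbit tends to `0`
  have hfx : ∀ x : E, Tendsto (fun n : ℕ => f n x) atTop (𝓝 (0 : E)) := by
    intro x
    have := (hT x).comp (tendsto_add_atTop_nat 1)
    exact this
  -- pointwise bounded
  have hb : ∀ x : E, Bornology.IsVonNBounded ℂ (Set.range fun n => f n x) :=
    fun x => (hfx x).isVonNBounded_range ℂ
  -- equicontinuity from barrelledness
  have heq : Equicontinuous fun n => ⇑(f n) := hbarrelled ℕ f hb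
  refine ⟨heq, ?_⟩
  intro p hp
  -- the seminorms `p ∘ f n`
  set P : ℕ → Seminorm ℂ E := fun n => p.comp (f n : E →ₗ[ℂ] E) with hP
  have hbx : ∀ x : E, BddAbove (Set.range fun n => P n x) := by
    intro x
    have : Tendsto (fun n => p (f n x)) atTop (𝓝 (p 0)) :=
      (hp.tendsto 0).comp (hfx x)
    exact this.bddAbove_range
  have bdd : BddAbove (Set.range P) := Seminorm.bddAbove_range_iff.mpr hbx
  set Q : Seminorm ℂ E := ⨆ n, P n with hQ
  have hQapp : ∀ x : E, Q x = ⨆ n, P n x := fun x => Seminorm.iSup_apply bdd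
  have hPQ : ∀ n x, P n x ≤ Q x := fun n x => (hQapp x).symm ▸ le_ciSup (hbx x) n
  -- from equicontinuity, `Q` is bounded on a neighbourhood of 0
  have hnhds : ∀ᶠ x in 𝓝 (0 : E), ∀ n, p (f n x) ≤ 1 := by
    have h0 : EquicontinuousAt (fun n => ⇑(f n)) 0 := heq 0
    have hV : {z : E | p z ≤ 1} ∈ 𝓝 (0 : E) := by
      refine Filter.mem_of_superset (IsOpen.mem_nhds (isOpen_Iio.preimage hp) ?_)
        (fun z hz => le_of_lt hz)
      simp [map_zero]
    have hU : ((fun y : E × E => y.2 - y.1) ⁻¹' {z | p z ≤ 1}) ∈ 𝓤 E := by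
      rw [uniformity_eq_comap_nhds_zero E]
      exact Filter.preimage_mem_comap hV
    filter_upwards [h0 _ hU] with x hx n
    have := hx n
    simpa using this
  have hQcont : Continuous ⇑Q := by
    apply Seminorm.continuous' (r := 1)
    filter_upwards [hnhds] with x hx
    rw [Seminorm.mem_closedBall_zero, hQapp x]
    exact ciSup_le fun n => hx n
  refine ⟨p ⊔ Q, ?_, ?_⟩
  · rw [Seminorm.coe_sup]
    exact hp.sup hQcont
  · intro m
    cases m with
    | zero =>
        exact ⟨1, one_pos, fun x => by
          simp only [pow_zero, ContinuousLinearMap.one_apply, one_mul]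
          exact (le_sup_left : p ≤ p ⊔ Q) x⟩
    | succ k =>
        refine ⟨(k + 1 : ℕ), by positivity, fun x => ?_⟩
        have hc : ((k + 1 : ℕ) : ℂ) ≠ 0 := by exact_mod_cast Nat.succ_ne_zero k
        have key : (T ^ (k + 1)) x = ((k + 1 : ℕ) : ℂ) • f k x := by
          simp only [hf, ContinuousLinearMap.smul_apply, smul_smul,
            mul_inv_cancel₀ hc, one_smul]
        calc p ((T ^ (k + 1)) x) = ((k + 1 : ℕ) : ℝ) * p (f k x) := by
              rw [key, map_smul_eq_mul, Complex.norm_natCast]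
          _ ≤ ((k + 1 : ℕ) : ℝ) * Q x := by
              have := hPQ k x
              simp only [hP, Seminorm.comp_apply] at this
              exact mul_le_mul_of_nonneg_left (by exact this) (by positivity)
          _ ≤ ((k + 1 : ℕ) : ℝ) * (p ⊔ Q) x :=
              mul_le_mul_of_nonneg_left ((le_sup_right : Q ≤ p ⊔ Q) x) (by positivity)
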